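/- Six unit vectors in R^3 given by n_k = (cos(kπ/3)·s, sin(kπ/3)·s, (−1)^k·t) for k = 0,...,5 with s, t > 0 satisfy: the only v ∈ R^3 with ⟨v, n_k⟩ ≥ 0 for all k is v = 0; hence a hexagonal-prism-like element whose six lateral faces have these inward normals is translationally locked. -/

import Mathlib

open Matrix

/-- For `s, t > 0`, the six vectors `n_k = (cos(kπ/3)·s, sin(kπ/3)·s, (−1)^k·t)`
(inward normals of the alternately tilted lateral faces over a regular hexagonal
middle section) admit no nonzero common direction: the only `v` with
`⟪v, n_k⟫ ≥ 0` for all `k` is `0`; hence such a hexagon-based element is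
translationally locked. -/
theorem hexagon_normal_configuration_locked
    (s t : ℝ) (hs : 0 < s) (ht : 0 < t)
    (n : Fin 6 → Fin 3 → ℝ)
    (hn : ∀ k : Fin 6, n k =
      ![Real.cos (k * Real.pi / 3) * s, Real.sin (k * Real.pi / 3) * s,
        (-1 : ℝ) ^ (k : ℕ) * t]) :
    ∀ v : Fin 3 → ℝ, (∀ k, 0 ≤ v ⬝ᵥ n k) → v = 0 := by
  intro v hv
  have c2 : Real.cos (2 * Real.pi / 3) = -(1/2) := by
    rw [show 2 * Real.pi / 3 = Real.pi - Real.pi / 3 by ring, Real.cos_pi_sub,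
      Real.cos_pi_div_three]
  have s2 : Real.sin (2 * Real.pi / 3) = Real.sqrt 3 / 2 := by
    rw [show 2 * Real.pi / 3 = Real.pi - Real.pi / 3 by ring, Real.sin_pi_sub,
      Real.sin_pi_div_three]
  have c4 : Real.cos (4 * Real.pi / 3) = -(1/2) := by
    rw [show 4 * Real.pi / 3 = Real.pi / 3 + Real.pi by ring, Real.cos_add_pi,
      Real.cos_pi_div_three]
  have s4 : Real.sin (4 * Real.pi / 3) = -(Real.sqrt 3 / 2) := by
    rw [show 4 * Real.pi / 3 = Real.pi / 3 + Real.pi by ring, Real.sin_add_pi,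
      Real.sin_pi_div_three]
  have c5 : Real.cos (5 * Real.pi / 3) = 1/2 := by
    rw [show 5 * Real.pi / 3 = 2 * Real.pi - Real.pi / 3 by ring, Real.cos_two_pi_sub,
      Real.cos_pi_div_three]
  have s5 : Real.sin (5 * Real.pi / 3) = -(Real.sqrt 3 / 2) := by
    rw [show 5 * Real.pi / 3 = 2 * Real.pi - Real.pi / 3 by ring, Real.sin_two_pi_sub,
      Real.sin_pi_div_three]
  have h0 := hv 0
  have h1 := hv 1
  have h2 := hv 2
  have h3 := hv 3
  have h4 := hv 4
  have h5 := hv 5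
  simp [hn, dotProduct, Fin.sum_univ_three] at h0 h1 h2 h3 h4 h5
  norm_num [Fin.val] at h0 h1 h2 h3 h4 h5
  rw [c2, s2] at h2
  rw [c4, s4] at h4
  rw [c5, s5] at h5
  norm_num at h3 h4 h5
  have sq3 : 0 < Real.sqrt 3 := by positivity
  have e0 : v 0 * s + v 2 * t = 0 := by linarith
  have e1 : v 0 * (1/2) * s + v 1 * (Real.sqrt 3 / 2) * s - v 2 * t = 0 := by linarith
  have e2 : - (v 0 * (1/2) * s) + v 1 * (Real.sqrt 3 / 2) * s + v 2 * t = 0 := by linarith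
  have hct : v 2 * t = 0 := by linarith
  have hc : v 2 = 0 := by
    rcases mul_eq_zero.mp hct with h | h
    · exact h
    · exact absurd h (ne_of_gt ht)
  have ha : v 0 = 0 := by
    have h' : v 0 * s = 0 := by rw [hc] at e0; linarith
    rcases mul_eq_zero.mp h' with h | h
    · exact h
    · exact absurd h (ne_of_gt hs)
  have hb : v 1 = 0 := by
    have h' : v 1 * (Real.sqrt 3 / 2 * s) = 0 := by
      have := e1; have := e2; nlinarith [e1, e2]
    rcases mul_eq_zero.mp h' with h | h
    · exact h
    · exact absurd h (by positivity)
  funext i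
  fin_cases i <;> simp [ha, hb, hc]
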